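/- Let n ≥ 2 and let A = (a_{i,j}) and T = (t_{i,j}) be elements of Θ⁺_Δ(n) such that a_{i,j} ≥ t_{i−1,j} for all integers i < j. Then Σ_{i=1}^{n} Σ_{(l,j)∈ℤ², i<l<j} ( a_{i,j} t_{i,l} − t_{i,j} t_{i+1,l} ) ≥ 0. -/

import Mathlib

/-- The set `Θ⁺_Δ(n)` of ℕ-valued ℤ×ℤ matrices which are `n`-periodic along the
diagonal, supported on entries `(i,j)` with `i < j`, and with finitely many nonzero
entries in each row. -/
structure ThetaPlus (n : ℕ) where
  a : ℤ → ℤ → ℕ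
  periodic : ∀ i j : ℤ, a i j = a (i + n) (j + n)
  upper : ∀ i j : ℤ, ¬i < j → a i j = 0
  rowFinite : ∀ i : ℤ, (Function.support (a i)).Finite

open Function in
private lemma finsum_le_finsum_aux {α : Type*} {f g : α → ℤ} (hf : (support f).Finite)
    (hg : (support g).Finite) (h : ∀ x, f x ≤ g x) : ∑ᶠ x, f x ≤ ∑ᶠ x, g x := by
  classical
  rw [finsum_eq_sum_of_support_subset f (s := hf.toFinset ∪ hg.toFinset)
      (by intro x hx; simp [hf.mem_toFinset, hx]),
    finsum_eq_sum_of_support_subset g (s := hf.toFinset ∪ hg.toFinset)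
      (by intro x hx; simp [hg.mem_toFinset, hx])]
  exact Finset.sum_le_sum fun i _ => h i

open Function in
private lemma supp_fin (x y : ℤ → ℕ) (hx : (support x).Finite) (hy : (support y).Finite)
    (c : ℤ × ℤ → Prop) [DecidablePred c] :
    (support fun p : ℤ × ℤ => if c p then (x p.2 : ℤ) * (y p.1 : ℤ) else 0).Finite := by
  apply Set.Finite.subset (hy.prod hx)
  intro p hp
  simp only [mem_support] at hp
  split_ifs at hp with hc
  · constructor
    · simp only [mem_support]
      intro h0; simp [h0] at hp
    · simp only [mem_support]
      intro h0; simp [h0] at hp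
  · simp at hp

theorem exponent_nonneg (n : ℕ) (hn : 2 ≤ n) (A T : ThetaPlus n)
    (h : ∀ i j : ℤ, i < j → T.a (i - 1) j ≤ A.a i j) :
    0 ≤ ∑ i ∈ Finset.Icc (1 : ℤ) (n : ℤ), ∑ᶠ p : ℤ × ℤ,
        (if i < p.1 ∧ p.1 < p.2 then
          (A.a i p.2 : ℤ) * (T.a i p.1 : ℤ) - (T.a i p.2 : ℤ) * (T.a (i + 1) p.1 : ℤ)
        else 0) := by
  classical
  set P : ℤ → ℤ × ℤ → ℤ := fun i p =>
    if i < p.1 ∧ p.1 < p.2 then (A.a i p.2 : ℤ) * (T.a i p.1 : ℤ) else 0 with hP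
  set N : ℤ → ℤ × ℤ → ℤ := fun i p =>
    if i < p.1 ∧ p.1 < p.2 then (T.a i p.2 : ℤ) * (T.a (i + 1) p.1 : ℤ) else 0 with hN
  set M : ℤ → ℤ × ℤ → ℤ := fun i p =>
    if i < p.1 ∧ p.1 < p.2 then (T.a (i - 1) p.2 : ℤ) * (T.a i p.1 : ℤ) else 0 with hM
  have hPfin : ∀ i, (Function.support (P i)).Finite := fun i =>
    supp_fin (A.a i) (T.a i) (A.rowFinite i) (T.rowFinite i) _
  have hNfin : ∀ i, (Function.support (N i)).Finite := fun i =>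
    supp_fin (T.a i) (T.a (i + 1)) (T.rowFinite i) (T.rowFinite (i + 1)) _
  have hMfin : ∀ i, (Function.support (M i)).Finite := fun i =>
    supp_fin (T.a (i - 1)) (T.a i) (T.rowFinite (i - 1)) (T.rowFinite i) _
  -- pointwise M ≤ P
  have hMP : ∀ i, ∑ᶠ p, M i p ≤ ∑ᶠ p, P i p := by
    intro i
    refine finsum_le_finsum_aux (hMfin i) (hPfin i) fun p => ?_
    simp only [hM, hP]
    split_ifs with hc
    · exact mul_le_mul_of_nonneg_right (by exact_mod_cast h i p.2 (hc.1.trans hc.2))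
        (by positivity)
    · exact le_refl 0
  -- N i = M (i+1) pointwise
  have hNM : ∀ i, N i = M (i + 1) := by
    intro i
    funext p
    simp only [hN, hM, add_sub_cancel_right]
    by_cases h1 : i + 1 < p.1 ∧ p.1 < p.2
    · rw [if_pos ⟨by omega, h1.2⟩, if_pos h1]
    · rw [if_neg h1]
      by_cases h2 : i < p.1 ∧ p.1 < p.2
      · rw [if_pos h2]
        have : p.1 = i + 1 := by omega
        rw [this, T.upper (i + 1) (i + 1) (lt_irrefl _)]
        simp
      · rw [if_neg h2]
  -- periodicity of ∑ᶠ M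
  have hMper : ∀ i : ℤ, ∑ᶠ p, M (i + n) p = ∑ᶠ p, M i p := by
    intro i
    have := finsum_comp_equiv (Equiv.addRight (((n : ℤ), (n : ℤ)) : ℤ × ℤ)) (f := M (i + n))
    rw [← this]
    apply finsum_congr
    intro p
    simp only [hM, Equiv.coe_addRight, Prod.fst_add, Prod.snd_add]
    have hc : (i + n < p.1 + n ∧ p.1 + n < p.2 + n) ↔ (i < p.1 ∧ p.1 < p.2) := by omega
    rw [if_congr hc rfl rfl]
    have e1 : T.a (i + n - 1) (p.2 + n) = T.a (i - 1) p.2 := by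
      rw [show i + (n : ℤ) - 1 = i - 1 + n by ring, ← T.periodic]
    have e2 : T.a (i + n) (p.1 + n) = T.a i p.1 := (T.periodic i p.1).symm
    rw [e1, e2]
  -- shift the sum over Icc 1 n
  have hshift : ∑ i ∈ Finset.Icc (1 : ℤ) (n : ℤ), ∑ᶠ p, M (i + 1) p
      = ∑ i ∈ Finset.Icc (1 : ℤ) (n : ℤ), ∑ᶠ p, M i p := by
    have hmap : ∑ i ∈ Finset.Icc (1 : ℤ) (n : ℤ), ∑ᶠ p, M (i + 1) p
        = ∑ i ∈ Finset.Icc (2 : ℤ) ((n : ℤ) + 1), ∑ᶠ p, M i p := by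
      have : Finset.Icc (2 : ℤ) ((n : ℤ) + 1)
          = (Finset.Icc (1 : ℤ) (n : ℤ)).map (addRightEmbedding 1) := by
        rw [Finset.map_add_right_Icc]; norm_num
      rw [this, Finset.sum_map]
      simp [addRightEmbedding]
    rw [hmap]
    have h1 : Finset.Icc (2 : ℤ) ((n : ℤ) + 1) = insert ((n : ℤ) + 1) (Finset.Icc 2 (n : ℤ)) := by
      ext x; simp only [Finset.mem_Icc, Finset.mem_insert]; omega
    have h2 : Finset.Icc (1 : ℤ) (n : ℤ) = insert (1 : ℤ) (Finset.Icc 2 (n : ℤ)) := by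
      ext x; simp only [Finset.mem_Icc, Finset.mem_insert]; omega
    rw [h1, h2, Finset.sum_insert (by simp only [Finset.mem_Icc]; omega), Finset.sum_insert (by simp only [Finset.mem_Icc]; omega)]
    congr 1
    rw [show (n : ℤ) + 1 = 1 + n by ring, hMper 1]
  -- rewrite the goal
  have hgoal : ∀ i : ℤ, (∑ᶠ p : ℤ × ℤ,
      (if i < p.1 ∧ p.1 < p.2 then
          (A.a i p.2 : ℤ) * (T.a i p.1 : ℤ) - (T.a i p.2 : ℤ) * (T.a (i + 1) p.1 : ℤ)
        else 0)) = (∑ᶠ p, P i p) - ∑ᶠ p, N i p := by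
    intro i
    rw [← finsum_sub_distrib (hPfin i) (hNfin i)]
    apply finsum_congr
    intro p
    simp only [hP, hN]
    split_ifs <;> simp
  calc (0 : ℤ) = (∑ i ∈ Finset.Icc (1 : ℤ) (n : ℤ), ∑ᶠ p, M i p)
        - ∑ i ∈ Finset.Icc (1 : ℤ) (n : ℤ), ∑ᶠ p, M i p := by ring
    _ ≤ (∑ i ∈ Finset.Icc (1 : ℤ) (n : ℤ), ∑ᶠ p, P i p)
        - ∑ i ∈ Finset.Icc (1 : ℤ) (n : ℤ), ∑ᶠ p, N i p := by
        apply sub_le_sub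
        · exact Finset.sum_le_sum fun i _ => hMP i
        · apply le_of_eq
          calc ∑ i ∈ Finset.Icc (1 : ℤ) (n : ℤ), ∑ᶠ p, N i p
              = ∑ i ∈ Finset.Icc (1 : ℤ) (n : ℤ), ∑ᶠ p, M (i + 1) p := by
                apply Finset.sum_congr rfl; intro i _; rw [hNM i]
            _ = ∑ i ∈ Finset.Icc (1 : ℤ) (n : ℤ), ∑ᶠ p, M i p := hshift
    _ = ∑ i ∈ Finset.Icc (1 : ℤ) (n : ℤ), ∑ᶠ p : ℤ × ℤ,
        (if i < p.1 ∧ p.1 < p.2 then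
          (A.a i p.2 : ℤ) * (T.a i p.1 : ℤ) - (T.a i p.2 : ℤ) * (T.a (i + 1) p.1 : ℤ)
        else 0) := by
        rw [← Finset.sum_sub_distrib]
        exact Finset.sum_congr rfl fun i _ => (hgoal i).symm
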